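/- Let (X,d) be a proper, uniquely geodesic, geodesically complete metric space in which geodesics do not split, and let I be a surjective isometry of the space 𝔉(X,d) of nonempty compact subsets of X endowed with the Hausdorff metric d_H. Then I({p}) is a singleton for every p ∈ X. -/

import Mathlib

open Metric Set TopologicalSpace

variable {X : Type*}

/-- A geodesic segment from `x` to `y`, parametrized by arclength on `[0, dist x y]`. -/
def IsGeodesicSegment [MetricSpace X] (γ : ℝ → X) (x y : X) : Prop :=
  γ 0 = x ∧ γ (dist x y) = y ∧
    ∀ s ∈ Set.Icc (0 : ℝ) (dist x y), ∀ t ∈ Set.Icc (0 : ℝ) (dist x y),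
      dist (γ s) (γ t) = |s - t|

/-- A metric space is geodesic if any two points are joined by a geodesic segment. -/
def IsGeodesicSpace (X : Type*) [MetricSpace X] : Prop :=
  ∀ x y : X, ∃ γ : ℝ → X, IsGeodesicSegment γ x y

/-- A metric space is uniquely geodesic if any two points are joined by a geodesic
segment, which is moreover unique (as a parametrized segment). -/
def IsUniquelyGeodesic (X : Type*) [MetricSpace X] : Prop :=
  ∀ x y : X, (∃ γ : ℝ → X, IsGeodesicSegment γ x y) ∧
    ∀ γ γ' : ℝ → X, IsGeodesicSegment γ x y → IsGeodesicSegment γ' x y →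
      ∀ t ∈ Set.Icc (0 : ℝ) (dist x y), γ t = γ' t

/-- Geodesic completeness: every geodesic segment extends to a full geodesic line,
i.e. an isometric embedding of `ℝ`. -/
def IsGeodesicallyComplete (X : Type*) [MetricSpace X] : Prop :=
  ∀ (x y : X) (γ : ℝ → X), IsGeodesicSegment γ x y →
    ∃ γ' : ℝ → X, Isometry γ' ∧ γ '' Set.Icc (0 : ℝ) (dist x y) ⊆ Set.range γ'

/-- Geodesics do not split: the image of the bi-infinite geodesic extension of every
nondegenerate geodesic segment is unique. -/
def GeodesicsDoNotSplit (X : Type*) [MetricSpace X] : Prop :=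
  ∀ (x y : X) (γ : ℝ → X), IsGeodesicSegment γ x y → x ≠ y →
    ∀ γ₁ γ₂ : ℝ → X, Isometry γ₁ → Isometry γ₂ →
      γ '' Set.Icc (0 : ℝ) (dist x y) ⊆ Set.range γ₁ →
      γ '' Set.Icc (0 : ℝ) (dist x y) ⊆ Set.range γ₂ →
      Set.range γ₁ = Set.range γ₂

/-- A subset is (geodesically) convex if with any two of its points it contains
the image of every geodesic segment joining them. -/
def IsGeodConvex [MetricSpace X] (C : Set X) : Prop :=
  ∀ a ∈ C, ∀ b ∈ C, ∀ γ : ℝ → X, IsGeodesicSegment γ a b →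
    γ '' Set.Icc (0 : ℝ) (dist a b) ⊆ C

/-- A midpoint map on a metric space: a symmetric map `m` with
`d(m(x,y),x) = d(x,y)/2 = d(m(x,y),y)`. -/
def IsMidpointMap [MetricSpace X] (m : X → X → X) : Prop :=
  (∀ x y, m x y = m y x) ∧
    ∀ x y, dist (m x y) x = dist x y / 2 ∧ dist (m x y) y = dist x y / 2

/-- A convex midpoint map:
`d(m(x₁,y₁), m(x₂,y₂)) ≤ (d(x₁,x₂) + d(y₁,y₂))/2` for all points. -/
def IsConvexMidpointMap [MetricSpace X] (m : X → X → X) : Prop :=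
  IsMidpointMap m ∧
    ∀ x₁ x₂ y₁ y₂ : X, dist (m x₁ y₁) (m x₂ y₂) ≤ (dist x₁ x₂ + dist y₁ y₂) / 2

/-- The space `𝒞(X,d)` of nonempty convex compact subsets of `X`, endowed with the
Hausdorff metric (as a subtype of `NonemptyCompacts X`, whose metric is the
Hausdorff distance). -/
abbrev ConvexCompacts (X : Type*) [MetricSpace X] :=
  {A : NonemptyCompacts X // IsGeodConvex (A : Set X)}

lemma isGeodConvex_singleton [MetricSpace X] (p : X) : IsGeodConvex ({p} : Set X) := by
  rintro a ha b hb γ hγ x ⟨t, ht, rfl⟩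
  rw [Set.mem_singleton_iff] at ha hb
  subst ha; subst hb
  rw [dist_self] at ht
  have : t = 0 := le_antisymm ht.2 ht.1
  subst this
  exact hγ.1

/-- The singleton `{p}` as an element of `𝒞(X,d)`. -/
def singletonCC [MetricSpace X] (p : X) : ConvexCompacts X :=
  ⟨⟨⟨{p}, isCompact_singleton⟩, Set.singleton_nonempty p⟩, isGeodConvex_singleton p⟩

/-- The singleton `{p}` as an element of `𝔉(X,d)`, the space of nonempty compact
subsets of `X` with the Hausdorff metric. -/
def singletonNC [MetricSpace X] (p : X) : NonemptyCompacts X :=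
  ⟨⟨{p}, isCompact_singleton⟩, Set.singleton_nonempty p⟩

/-- The closed `r`-neighborhood `N_r(A) = {x | ∃ a ∈ A, d(a,x) ≤ r}` of a set. -/
def closedNbhd [MetricSpace X] (r : ℝ) (A : Set X) : Set X :=
  {x : X | ∃ a ∈ A, dist a x ≤ r}

/-- A set is `m`-convex if it contains the `m`-midpoint of each pair of its points. -/
def MConvexSet [MetricSpace X] (m : X → X → X) (A : Set X) : Prop :=
  ∀ a ∈ A, ∀ a' ∈ A, m a a' ∈ A

/-- The `m`-convex hull: the intersection of all closed `m`-convex sets containing `A`. -/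
def mConvexHull [MetricSpace X] (m : X → X → X) (A : Set X) : Set X :=
  ⋂₀ {C : Set X | IsClosed C ∧ MConvexSet m C ∧ A ⊆ C}

section AuxProof

variable [MetricSpace X]

private lemma le_infDist_of_forall {s : Set X} {x : X} {r : ℝ} (hs : s.Nonempty)
    (h : ∀ y ∈ s, r ≤ dist x y) : r ≤ Metric.infDist x s := by
  by_contra hlt
  push_neg at hlt
  obtain ⟨y, hy, hd⟩ := (Metric.infDist_lt_iff hs).1 hlt
  exact absurd (h y hy) (by linarith)

private lemma concat_geodesic {b p c : X} {γ₁ γ₂ : ℝ → X}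
    (h₁ : IsGeodesicSegment γ₁ b p) (h₂ : IsGeodesicSegment γ₂ p c)
    (hd₁0 : 0 < dist b p) (hd₂0 : 0 < dist p c)
    (hsum : dist b c = dist b p + dist p c) :
    IsGeodesicSegment (fun t => if t ≤ dist b p then γ₁ t else γ₂ (t - dist b p)) b c := by
  obtain ⟨h10, h11, h1d⟩ := h₁
  obtain ⟨h20, h21, h2d⟩ := h₂
  have key : ∀ s ∈ Set.Icc (0:ℝ) (dist b c), ∀ t ∈ Set.Icc (0:ℝ) (dist b c), s ≤ t →
      dist ((fun t => if t ≤ dist b p then γ₁ t else γ₂ (t - dist b p)) s)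
        ((fun t => if t ≤ dist b p then γ₁ t else γ₂ (t - dist b p)) t) = t - s := by
    intro s hs t ht hst
    rw [hsum] at hs ht
    obtain ⟨hs0, hs1⟩ := hs
    obtain ⟨ht0, ht1⟩ := ht
    by_cases hts : t ≤ dist b p
    · have hss : s ≤ dist b p := le_trans hst hts
      simp only [if_pos hts, if_pos hss]
      rw [h1d s ⟨hs0, hss⟩ t ⟨ht0, hts⟩, abs_of_nonpos (by linarith)]
      ring
    · push_neg at hts
      have htmem : t - dist b p ∈ Set.Icc (0:ℝ) (dist p c) := ⟨by linarith, by linarith [ht1]⟩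
      by_cases hss : s ≤ dist b p
      · simp only [if_pos hss, if_neg (not_le.2 hts)]
        -- upper bound
        have hup : dist (γ₁ s) (γ₂ (t - dist b p)) ≤ t - s := by
          have e1 : dist (γ₁ s) p = dist b p - s := by
            have := h1d s ⟨hs0, hss⟩ (dist b p) ⟨dist_nonneg, le_refl _⟩
            rw [h11] at this
            rw [this, abs_of_nonpos (by linarith)]; ring
          have e2 : dist p (γ₂ (t - dist b p)) = t - dist b p := by
            have := h2d 0 ⟨le_refl _, dist_nonneg⟩ (t - dist b p) htmem
            rw [h20] at this
            rw [this, abs_of_nonpos (by linarith)]; ring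
          calc dist (γ₁ s) (γ₂ (t - dist b p))
              ≤ dist (γ₁ s) p + dist p (γ₂ (t - dist b p)) := dist_triangle _ _ _
            _ = t - s := by rw [e1, e2]; ring
        have hdown : t - s ≤ dist (γ₁ s) (γ₂ (t - dist b p)) := by
          have e3 : dist b (γ₁ s) = s := by
            have := h1d 0 ⟨le_refl _, dist_nonneg⟩ s ⟨hs0, hss⟩
            rw [h10] at this
            rw [this, abs_of_nonpos (by linarith)]; ring
          have e4 : dist (γ₂ (t - dist b p)) c = dist b c - t := by
            have := h2d (t - dist b p) htmem (dist p c) ⟨dist_nonneg, le_refl _⟩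
            rw [h21] at this
            rw [this, abs_of_nonpos (by linarith [ht1]), hsum]; ring
          have := dist_triangle4 b (γ₁ s) (γ₂ (t - dist b p)) c
          rw [e3, e4] at this
          linarith
        linarith [le_antisymm hup hdown]
      · push_neg at hss
        have hsmem : s - dist b p ∈ Set.Icc (0:ℝ) (dist p c) := ⟨by linarith, by linarith [hs1]⟩
        simp only [if_neg (not_le.2 hts), if_neg (not_le.2 hss)]
        rw [h2d _ hsmem _ htmem, abs_of_nonpos (by linarith)]
        ring
  refine ⟨by simp [le_of_lt hd₁0, h10], ?_, ?_⟩
  · have h1 : ¬ (dist b c ≤ dist b p) := by rw [hsum]; push_neg; linarith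
    simp only [if_neg h1]
    rw [hsum]
    have : dist b p + dist p c - dist b p = dist p c := by ring
    rw [this, h21]
  · intro s hs t ht
    rcases le_total s t with h | h
    · rw [key s hs t ht h, abs_of_nonpos (by linarith)]; ring
    · rw [dist_comm, key t ht s hs h, abs_of_nonneg (by linarith)]

private lemma real_far {ρ s tb tp t t' : ℝ} (hρ : 0 < ρ) (hs : 0 < s)
    (h1 : |tb - tp| = ρ) (h2 : |tp - t| = s) (h3 : |tb - t| = ρ + s)
    (h2' : |tp - t'| = s) (h3' : |tb - t'| = ρ + s) : t = t' := by
  rcases abs_cases (tb - tp) with ⟨e1, _⟩ | ⟨e1, _⟩ <;>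
    rcases abs_cases (tp - t) with ⟨e2, _⟩ | ⟨e2, _⟩ <;>
      rcases abs_cases (tb - t) with ⟨e3, _⟩ | ⟨e3, _⟩ <;>
        rcases abs_cases (tp - t') with ⟨e4, _⟩ | ⟨e4, _⟩ <;>
          rcases abs_cases (tb - t') with ⟨e5, _⟩ | ⟨e5, _⟩ <;>
            linarith

private lemma unique_far_point (hug : IsUniquelyGeodesic X) (hgc : IsGeodesicallyComplete X)
    (hns : GeodesicsDoNotSplit X) {b p c c' : X} {s : ℝ} (hs : 0 < s) (hbp : b ≠ p)
    (hpc : dist p c = s) (hbc : dist b c = dist b p + s)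
    (hpc' : dist p c' = s) (hbc' : dist b c' = dist b p + s) : c = c' := by
  have hdbp : 0 < dist b p := dist_pos.2 hbp
  obtain ⟨γ₁, hγ₁⟩ := (hug b p).1
  have key : ∀ z : X, dist p z = s → dist b z = dist b p + s →
      ∃ L : ℝ → X, Isometry L ∧ γ₁ '' Set.Icc 0 (dist b p) ⊆ Set.range L ∧
        (∃ tb, L tb = b) ∧ (∃ tp, L tp = p) ∧ (∃ tz, L tz = z) := by
    intro z hpz hbz
    obtain ⟨γ₂, hγ₂⟩ := (hug p z).1
    have hpz0 : 0 < dist p z := by rw [hpz]; exact hs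
    have hsum : dist b z = dist b p + dist p z := by rw [hpz]; exact hbz
    have hδ := concat_geodesic hγ₁ hγ₂ hdbp hpz0 hsum
    obtain ⟨L, hLiso, hLsub⟩ := hgc b z _ hδ
    have hbz_nonneg : dist b p ≤ dist b z := by rw [hsum]; linarith
    refine ⟨L, hLiso, ?_, ?_, ?_, ?_⟩
    · intro w hw
      obtain ⟨u, hu, huw⟩ := hw
      have humem : u ∈ Set.Icc (0:ℝ) (dist b z) := ⟨hu.1, le_trans hu.2 hbz_nonneg⟩
      have : (fun t => if t ≤ dist b p then γ₁ t else γ₂ (t - dist b p)) u = w := by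
        simp only [if_pos hu.2]; exact huw
      exact hLsub ⟨u, humem, this⟩
    · have h0 : (0:ℝ) ∈ Set.Icc (0:ℝ) (dist b z) := ⟨le_refl _, dist_nonneg⟩
      have : (fun t => if t ≤ dist b p then γ₁ t else γ₂ (t - dist b p)) 0 = b := hδ.1
      obtain ⟨tb, htb⟩ := hLsub ⟨0, h0, this⟩
      exact ⟨tb, htb⟩
    · have hmem : dist b p ∈ Set.Icc (0:ℝ) (dist b z) := ⟨dist_nonneg, hbz_nonneg⟩
      have : (fun t => if t ≤ dist b p then γ₁ t else γ₂ (t - dist b p)) (dist b p) = p := by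
        simp only [if_pos (le_refl _)]; exact hγ₁.2.1
      obtain ⟨tp, htp⟩ := hLsub ⟨dist b p, hmem, this⟩
      exact ⟨tp, htp⟩
    · have hmem : dist b z ∈ Set.Icc (0:ℝ) (dist b z) := ⟨dist_nonneg, le_refl _⟩
      obtain ⟨tz, htz⟩ := hLsub ⟨dist b z, hmem, hδ.2.1⟩
      exact ⟨tz, htz⟩
  obtain ⟨L, hLiso, hLsub, _, _, ⟨tc0, htc0⟩⟩ := key c hpc hbc
  obtain ⟨L', hL'iso, hL'sub, ⟨tb, htb⟩, ⟨tp, htp⟩, ⟨tc', htc'⟩⟩ := key c' hpc' hbc'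
  have hrange : Set.range L = Set.range L' :=
    hns b p γ₁ hγ₁ hbp L L' hLiso hL'iso hLsub hL'sub
  have hcmem : c ∈ Set.range L' := by
    rw [← hrange]; exact ⟨tc0, htc0⟩
  obtain ⟨tc, htc⟩ := hcmem
  have dd : ∀ u v : ℝ, dist (L' u) (L' v) = |u - v| := by
    intro u v; rw [hL'iso.dist_eq, Real.dist_eq]
  have e1 : |tb - tp| = dist b p := by rw [← dd, htb, htp]
  have e2 : |tp - tc| = s := by rw [← hpc, ← dd, htp, htc]
  have e3 : |tb - tc| = dist b p + s := by rw [← dd, htb, htc, hbc]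
  have e2' : |tp - tc'| = s := by rw [← hpc', ← dd, htp, htc']
  have e3' : |tb - tc'| = dist b p + s := by rw [← dd, htb, htc', hbc']
  have : tc = tc' := real_far hdbp hs e1 e2 e3 e2' e3'
  rw [← htc, ← htc', this]

open Metric in
private lemma hd_ss {u v : X} : hausdorffDist ({u} : Set X) {v} = dist u v := by
  apply le_antisymm
  · apply hausdorffDist_le_of_mem_dist dist_nonneg
    · rintro z hz
      rw [Set.mem_singleton_iff] at hz; subst hz
      exact ⟨v, rfl, le_refl _⟩
    · rintro z hz
      rw [Set.mem_singleton_iff] at hz; subst hz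
      exact ⟨u, rfl, by rw [dist_comm]⟩
  · have hne := hausdorffEdist_ne_top_of_nonempty_of_bounded (Set.singleton_nonempty u)
      (Set.singleton_nonempty v) Bornology.isBounded_singleton Bornology.isBounded_singleton
    have := infDist_le_hausdorffDist_of_mem (Set.mem_singleton u) hne
    rwa [infDist_singleton] at this

open Metric in
private lemma side_sing (hug : IsUniquelyGeodesic X) (hgc : IsGeodesicallyComplete X)
    (hns : GeodesicsDoNotSplit X) {p b : X} {r : ℝ} (hr : 0 < r) {t : Set X} (htn : t.Nonempty)
    (hpb : dist p b ≤ r) (ht : ∀ z ∈ t, dist p z ≤ r) (hM : ∀ c ∈ t, 2 * r ≤ dist b c) :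
    ∃ u, t = {u} ∧ dist p u = r := by
  obtain ⟨c₀, hc₀⟩ := htn
  have hbp : dist b p = r := by
    have h1 := hM c₀ hc₀
    have h2 := dist_triangle b p c₀
    have h3 := ht c₀ hc₀
    have h4 : dist b p ≤ r := by rw [dist_comm]; exact hpb
    linarith
  have key : ∀ c ∈ t, dist p c = r ∧ dist b c = dist b p + r := by
    intro c hc
    have h1 := hM c hc
    have h2 := dist_triangle b p c
    have h3 := ht c hc
    constructor
    · linarith
    · rw [hbp]; linarith
  have hbne : b ≠ p := by
    intro h; rw [h, dist_self] at hbp; linarith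
  refine ⟨c₀, Set.eq_singleton_iff_unique_mem.2 ⟨hc₀, fun c hc => ?_⟩, (key c₀ hc₀).1⟩
  exact unique_far_point hug hgc hns hr hbne (key c hc).1 (key c hc).2
    (key c₀ hc₀).1 (key c₀ hc₀).2

open Metric in
private lemma pair_sing (hug : IsUniquelyGeodesic X) (hgc : IsGeodesicallyComplete X)
    (hns : GeodesicsDoNotSplit X) {p : X} {r : ℝ} (hr : 0 < r) {s t : Set X}
    (hsc : IsCompact s) (hsn : s.Nonempty) (htc : IsCompact t) (htn : t.Nonempty)
    (hs : ∀ z ∈ s, dist p z ≤ r) (ht : ∀ z ∈ t, dist p z ≤ r)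
    (hd : hausdorffDist s t = 2 * r) :
    (∃ u, s = {u} ∧ dist p u = r) ∨ (∃ u, t = {u} ∧ dist p u = r) := by
  obtain ⟨b₁, hb₁, hmax₁⟩ := hsc.exists_isMaxOn hsn (continuous_infDist_pt t).continuousOn
  obtain ⟨b₂, hb₂, hmax₂⟩ := htc.exists_isMaxOn htn (continuous_infDist_pt s).continuousOn
  have hle : hausdorffDist s t ≤ max (infDist b₁ t) (infDist b₂ s) := by
    apply hausdorffDist_le_of_mem_dist (le_trans infDist_nonneg (le_max_left _ _))
    · intro z hz
      obtain ⟨w, hw, hdw⟩ := htc.exists_infDist_eq_dist htn z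
      exact ⟨w, hw, by rw [← hdw]; exact le_trans (isMaxOn_iff.1 hmax₁ z hz) (le_max_left _ _)⟩
    · intro z hz
      obtain ⟨w, hw, hdw⟩ := hsc.exists_infDist_eq_dist hsn z
      exact ⟨w, hw, by rw [← hdw]; exact le_trans (isMaxOn_iff.1 hmax₂ z hz) (le_max_right _ _)⟩
  rw [hd] at hle
  rcases le_max_iff.1 hle with hMax | hMax
  · right
    refine side_sing hug hgc hns hr htn (hs b₁ hb₁) ht (fun c hc => ?_)
    exact le_trans hMax (infDist_le_dist_of_mem hc)
  · left
    refine side_sing hug hgc hns hr hsn (ht b₂ hb₂) hs (fun c hc => ?_)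
    exact le_trans hMax (infDist_le_dist_of_mem hc)

private lemma three_sing (hug : IsUniquelyGeodesic X) (hgc : IsGeodesicallyComplete X)
    (hns : GeodesicsDoNotSplit X) {p u v w : X} {r : ℝ} (hr : 0 < r)
    (hpu : dist p u = r) (hpv : dist p v = r) (hpw : dist p w = r)
    (huv : dist u v = 2 * r) (huw : dist u w = 2 * r) (hvw : dist v w = 2 * r) : False := by
  have hup : u ≠ p := by
    intro h; rw [h, dist_self] at hpu; linarith
  have hupd : dist u p = r := by rw [dist_comm]; exact hpu
  have : v = w :=
    unique_far_point hug hgc hns hr hup hpv (by rw [hupd]; linarith)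
      hpw (by rw [hupd]; linarith)
  rw [this, dist_self] at hvw
  linarith

open Metric in
private lemma no_four (hug : IsUniquelyGeodesic X) (hgc : IsGeodesicallyComplete X)
    (hns : GeodesicsDoNotSplit X) {p : X} {r : ℝ} (hr : 0 < r)
    {C₁ C₂ C₃ C₄ : Set X}
    (hc₁ : IsCompact C₁) (hn₁ : C₁.Nonempty) (hb₁ : ∀ z ∈ C₁, dist p z ≤ r)
    (hc₂ : IsCompact C₂) (hn₂ : C₂.Nonempty) (hb₂ : ∀ z ∈ C₂, dist p z ≤ r)
    (hc₃ : IsCompact C₃) (hn₃ : C₃.Nonempty) (hb₃ : ∀ z ∈ C₃, dist p z ≤ r)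
    (hc₄ : IsCompact C₄) (hn₄ : C₄.Nonempty) (hb₄ : ∀ z ∈ C₄, dist p z ≤ r)
    (h12 : hausdorffDist C₁ C₂ = 2 * r) (h13 : hausdorffDist C₁ C₃ = 2 * r)
    (h14 : hausdorffDist C₁ C₄ = 2 * r) (h23 : hausdorffDist C₂ C₃ = 2 * r)
    (h24 : hausdorffDist C₂ C₄ = 2 * r) (h34 : hausdorffDist C₃ C₄ = 2 * r) : False := by
  have P12 := pair_sing hug hgc hns hr hc₁ hn₁ hc₂ hn₂ hb₁ hb₂ h12
  have P34 := pair_sing hug hgc hns hr hc₃ hn₃ hc₄ hn₄ hb₃ hb₄ h34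
  rcases P12 with ⟨u, hu, hpu⟩ | ⟨u, hu, hpu⟩ <;> rcases P34 with ⟨v, hv, hpv⟩ | ⟨v, hv, hpv⟩
  · rcases pair_sing hug hgc hns hr hc₂ hn₂ hc₄ hn₄ hb₂ hb₄ h24 with ⟨w, hw, hpw⟩ | ⟨w, hw, hpw⟩
    · rw [hu, hw, hd_ss] at h12
      rw [hu, hv, hd_ss] at h13
      rw [hw, hv, hd_ss] at h23
      exact three_sing hug hgc hns hr hpu hpw hpv h12 h13 h23
    · rw [hu, hw, hd_ss] at h14
      rw [hu, hv, hd_ss] at h13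
      rw [hv, hw, hd_ss] at h34
      exact three_sing hug hgc hns hr hpu hpw hpv h14 h13 (by rw [dist_comm]; exact h34)
  · rcases pair_sing hug hgc hns hr hc₂ hn₂ hc₃ hn₃ hb₂ hb₃ h23 with ⟨w, hw, hpw⟩ | ⟨w, hw, hpw⟩
    · rw [hu, hw, hd_ss] at h12
      rw [hu, hv, hd_ss] at h14
      rw [hw, hv, hd_ss] at h24
      exact three_sing hug hgc hns hr hpu hpw hpv h12 h14 h24
    · rw [hu, hw, hd_ss] at h13
      rw [hu, hv, hd_ss] at h14
      rw [hw, hv, hd_ss] at h34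
      exact three_sing hug hgc hns hr hpu hpw hpv h13 h14 h34
  · rcases pair_sing hug hgc hns hr hc₁ hn₁ hc₄ hn₄ hb₁ hb₄ h14 with ⟨w, hw, hpw⟩ | ⟨w, hw, hpw⟩
    · rw [hw, hu, hd_ss] at h12
      rw [hw, hv, hd_ss] at h13
      rw [hu, hv, hd_ss] at h23
      exact three_sing hug hgc hns hr hpw hpu hpv h12 h13 h23
    · rw [hu, hv, hd_ss] at h23
      rw [hu, hw, hd_ss] at h24
      rw [hv, hw, hd_ss] at h34
      exact three_sing hug hgc hns hr hpu hpv hpw h23 h24 h34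
  · rcases pair_sing hug hgc hns hr hc₁ hn₁ hc₃ hn₃ hb₁ hb₃ h13 with ⟨w, hw, hpw⟩ | ⟨w, hw, hpw⟩
    · rw [hw, hu, hd_ss] at h12
      rw [hw, hv, hd_ss] at h14
      rw [hu, hv, hd_ss] at h24
      exact three_sing hug hgc hns hr hpw hpu hpv h12 h14 h24
    · rw [hw, hu, hd_ss] at h23
      rw [hw, hv, hd_ss] at h34
      rw [hu, hv, hd_ss] at h24
      exact three_sing hug hgc hns hr hpw hpu hpv (by rw [dist_comm]; exact h23) h34 h24

open Metric in
private lemma four_around [ProperSpace X]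
    (hug : IsUniquelyGeodesic X) (hgc : IsGeodesicallyComplete X)
    {A : Set X} (hA : IsCompact A) {x y : X} (hx : x ∈ A) (hy : y ∈ A) (hxy : y ≠ x)
    (hdiam : ∀ a ∈ A, ∀ b ∈ A, dist a b ≤ dist y x) :
    ∃ B₁ B₂ B₃ B₄ : Set X,
      (IsCompact B₁ ∧ IsCompact B₂ ∧ IsCompact B₃ ∧ IsCompact B₄) ∧
      (B₁.Nonempty ∧ B₂.Nonempty ∧ B₃.Nonempty ∧ B₄.Nonempty) ∧
      (hausdorffDist A B₁ ≤ dist y x / 5 ∧ hausdorffDist A B₂ ≤ dist y x / 5 ∧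
        hausdorffDist A B₃ ≤ dist y x / 5 ∧ hausdorffDist A B₄ ≤ dist y x / 5) ∧
      (hausdorffDist B₁ B₂ = 2 * (dist y x / 5) ∧ hausdorffDist B₁ B₃ = 2 * (dist y x / 5) ∧
        hausdorffDist B₁ B₄ = 2 * (dist y x / 5) ∧ hausdorffDist B₂ B₃ = 2 * (dist y x / 5) ∧
        hausdorffDist B₂ B₄ = 2 * (dist y x / 5) ∧ hausdorffDist B₃ B₄ = 2 * (dist y x / 5)) := by
  set D := dist y x with hDdef
  have hD0 : 0 < D := dist_pos.2 hxy
  set r := D / 5 with hrdef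
  have hr0 : 0 < r := by positivity
  have hDr : D = 5 * r := by rw [hrdef]; ring
  have hAne : A.Nonempty := ⟨x, hx⟩
  -- the main geodesic line through y and x
  obtain ⟨η, hη⟩ := (hug y x).1
  obtain ⟨γ, hγiso, hγsub⟩ := hgc y x η hη
  obtain ⟨u₀, hu₀⟩ := hγsub ⟨0, ⟨le_refl _, dist_nonneg⟩, hη.1⟩
  obtain ⟨u₁, hu₁⟩ := hγsub ⟨dist y x, ⟨dist_nonneg, le_refl _⟩, hη.2.1⟩
  have habs : |u₀ - u₁| = D := by
    have h := hγiso.dist_eq u₀ u₁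
    rw [hu₀, hu₁] at h
    rw [← Real.dist_eq, ← h]
  obtain ⟨g, hgd, hg0, hgD⟩ :
      ∃ g : ℝ → X, (∀ a b : ℝ, dist (g a) (g b) = |a - b|) ∧ g 0 = y ∧ g D = x := by
    rcases le_total u₀ u₁ with h | h
    · have h1 : u₁ = u₀ + D := by
        have h2 := habs
        rw [abs_of_nonpos (by linarith)] at h2
        linarith
      refine ⟨fun t => γ (u₀ + t), fun a b => ?_, by simpa using hu₀, ?_⟩
      · rw [hγiso.dist_eq, Real.dist_eq]
        congr 1
        ring
      · show γ (u₀ + D) = x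
        rw [← h1]
        exact hu₁
    · have h1 : u₁ = u₀ - D := by
        have h2 := habs
        rw [abs_of_nonneg (by linarith)] at h2
        linarith
      refine ⟨fun t => γ (u₀ - t), fun a b => ?_, by simpa using hu₀, ?_⟩
      · rw [hγiso.dist_eq, Real.dist_eq, show u₀ - a - (u₀ - b) = -(a - b) by ring, abs_neg]
      · show γ (u₀ - D) = x
        rw [← h1]
        exact hu₁
  set yh := g (-r) with hyhdef
  set xh := g (D + r) with hxhdef
  have dyhy : dist yh y = r := by
    rw [← hg0, hyhdef, hgd, show (-r - 0 : ℝ) = -r by ring, abs_neg, abs_of_nonneg hr0.le]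
  have dyhx : dist yh x = D + r := by
    rw [← hgD, hyhdef, hgd, show (-r - D : ℝ) = -(D + r) by ring, abs_neg,
      abs_of_nonneg (by linarith)]
  have dxhx : dist xh x = r := by
    rw [← hgD, hxhdef, hgd, show (D + r - D : ℝ) = r by ring, abs_of_nonneg hr0.le]
  have dxhy : dist xh y = D + r := by
    rw [← hg0, hxhdef, hgd, show (D + r - 0 : ℝ) = D + r by ring, abs_of_nonneg (by linarith)]
  have dyhxh : dist yh xh = D + 2 * r := by
    rw [hyhdef, hxhdef, hgd, show (-r - (D + r) : ℝ) = -(D + 2 * r) by ring, abs_neg,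
      abs_of_nonneg (by linarith)]
  have hax : ∀ a ∈ A, dist a x ≤ D := fun a ha => hdiam a ha x hx
  have hya : ∀ a ∈ A, dist y a ≤ D := fun a ha => hdiam y hy a ha
  have hyha_lb : ∀ a ∈ A, r ≤ dist yh a := by
    intro a ha
    have h1 := dist_triangle yh a x
    rw [dyhx] at h1
    linarith [hax a ha]
  have hyha_ub : ∀ a ∈ A, dist yh a ≤ D + r := by
    intro a ha
    have h1 := dist_triangle yh y a
    rw [dyhy] at h1
    linarith [hya a ha]
  -- inward shift
  have exPm : ∀ a : X, ∃ w : X, r ≤ dist yh a → dist a w = r ∧ dist yh w = dist yh a - r := by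
    intro a
    obtain ⟨γ', hγ'⟩ := (hug yh a).1
    refine ⟨γ' (dist yh a - r), fun hra => ⟨?_, ?_⟩⟩
    · have h := hγ'.2.2 (dist yh a) ⟨dist_nonneg, le_refl _⟩ (dist yh a - r)
        ⟨by linarith, by linarith⟩
      rw [hγ'.2.1] at h
      rw [h, show dist yh a - (dist yh a - r) = r by ring, abs_of_nonneg hr0.le]
    · have h := hγ'.2.2 0 ⟨le_refl _, dist_nonneg⟩ (dist yh a - r) ⟨by linarith, by linarith⟩
      rw [hγ'.1] at h
      rw [h, show (0 : ℝ) - (dist yh a - r) = -(dist yh a - r) by ring, abs_neg,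
        abs_of_nonneg (by linarith)]
  choose Pm hPm using exPm
  -- outward shift
  have exPp : ∀ a : X, ∃ w : X, dist a w = r ∧ dist yh w = dist yh a + r := by
    intro a
    obtain ⟨γ', hγ'⟩ := (hug yh a).1
    obtain ⟨L, hLiso, hLsub⟩ := hgc yh a γ' hγ'
    obtain ⟨v₀, hv₀⟩ := hLsub ⟨0, ⟨le_refl _, dist_nonneg⟩, hγ'.1⟩
    obtain ⟨v₁, hv₁⟩ := hLsub ⟨dist yh a, ⟨dist_nonneg, le_refl _⟩, hγ'.2.1⟩
    have habs' : |v₀ - v₁| = dist yh a := by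
      have h := hLiso.dist_eq v₀ v₁
      rw [hv₀, hv₁] at h
      rw [← Real.dist_eq, ← h]
    rcases le_total v₀ v₁ with h | h
    · have h1 : v₁ - v₀ = dist yh a := by
        have h2 := habs'
        rw [abs_of_nonpos (by linarith)] at h2
        linarith
      have h2 : (0 : ℝ) ≤ v₁ - v₀ + r := by
        rw [h1]; linarith [dist_nonneg (x := yh) (y := a)]
      refine ⟨L (v₁ + r), ?_, ?_⟩
      · rw [← hv₁, hLiso.dist_eq, Real.dist_eq, show v₁ - (v₁ + r) = -r by ring, abs_neg,
          abs_of_nonneg hr0.le]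
      · rw [← hv₀, hLiso.dist_eq, Real.dist_eq, show v₀ - (v₁ + r) = -(v₁ - v₀ + r) by ring,
          abs_neg, abs_of_nonneg h2, h1, hv₀]
    · have h1 : v₀ - v₁ = dist yh a := by
        have h2 := habs'
        rw [abs_of_nonneg (by linarith)] at h2
        linarith
      have h2 : (0 : ℝ) ≤ v₀ - v₁ + r := by
        rw [h1]; linarith [dist_nonneg (x := yh) (y := a)]
      refine ⟨L (v₁ - r), ?_, ?_⟩
      · rw [← hv₁, hLiso.dist_eq, Real.dist_eq, show v₁ - (v₁ - r) = r by ring,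
          abs_of_nonneg hr0.le]
      · rw [← hv₀, hLiso.dist_eq, Real.dist_eq, show v₀ - (v₁ - r) = v₀ - v₁ + r by ring,
          abs_of_nonneg h2, h1, hv₀]
  choose Pp hPp1 hPp2 using exPp
  have haPm : ∀ a ∈ A, dist a (Pm a) = r := fun a ha => (hPm a (hyha_lb a ha)).1
  have hyhPm : ∀ a ∈ A, dist yh (Pm a) = dist yh a - r := fun a ha => (hPm a (hyha_lb a ha)).2
  -- the four sets
  set S₁ := {a ∈ A | 3 * r ≤ dist yh a} with hS₁def
  set S₂ := {a ∈ A | 3 * r ≤ dist xh a} with hS₂def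
  set B₁ := closure (Pm '' A) with hB₁def
  set B₂ := closure (Pp '' A ∪ {xh}) with hB₂def
  set B₃ := B₁ ∪ B₂ with hB₃def
  set B₄ := closure (Pm '' S₁ ∪ Pp '' S₂) with hB₄def
  have hxS₁ : x ∈ S₁ := by
    refine ⟨hx, ?_⟩
    rw [dyhx]
    linarith
  have hyS₂ : y ∈ S₂ := by
    refine ⟨hy, ?_⟩
    rw [dxhy]
    linarith
  -- memberships
  have hPmy_yh : Pm y = yh := by
    have h := (hPm y dyhy.ge).2
    rw [dyhy, sub_self] at h
    exact (dist_eq_zero.1 h).symm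
  have hyhB₁ : yh ∈ B₁ := subset_closure ⟨y, hy, hPmy_yh⟩
  have hxhB₂ : xh ∈ B₂ := subset_closure (Set.mem_union_right _ rfl)
  -- boundedness and compactness
  have hgen₁ : Pm '' A ⊆ closedBall yh (D + 2 * r) := by
    rintro w ⟨a, ha, rfl⟩
    rw [mem_closedBall, dist_comm, hyhPm a ha]
    linarith [hyha_ub a ha]
  have hgen₂ : Pp '' A ∪ {xh} ⊆ closedBall yh (D + 2 * r) := by
    rintro w (⟨a, ha, rfl⟩ | hw)
    · rw [mem_closedBall, dist_comm, hPp2 a]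
      linarith [hyha_ub a ha]
    · rw [Set.mem_singleton_iff] at hw
      subst hw
      rw [mem_closedBall, dist_comm, dyhxh]
  have hgen₄ : Pm '' S₁ ∪ Pp '' S₂ ⊆ closedBall yh (D + 2 * r) := by
    rintro w (⟨a, ha, rfl⟩ | ⟨a, ha, rfl⟩)
    · exact hgen₁ ⟨a, ha.1, rfl⟩
    · rw [mem_closedBall, dist_comm, hPp2 a]
      linarith [hyha_ub a ha.1]
  have hcomp : ∀ s : Set X, s ⊆ closedBall yh (D + 2 * r) → IsCompact (closure s) := by
    intro s hs
    exact (isCompact_closedBall yh (D + 2 * r)).of_isClosed_subset isClosed_closure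
      (closure_minimal hs isClosed_closedBall)
  have hcB₁ : IsCompact B₁ := hcomp _ hgen₁
  have hcB₂ : IsCompact B₂ := hcomp _ hgen₂
  have hcB₃ : IsCompact B₃ := hcB₁.union hcB₂
  have hcB₄ : IsCompact B₄ := hcomp _ hgen₄
  have hnB₁ : B₁.Nonempty := ⟨yh, hyhB₁⟩
  have hnB₂ : B₂.Nonempty := ⟨xh, hxhB₂⟩
  have hnB₃ : B₃.Nonempty := ⟨yh, Set.mem_union_left _ hyhB₁⟩
  have hnB₄ : B₄.Nonempty := ⟨Pm x, subset_closure (Set.mem_union_left _ ⟨x, hxS₁, rfl⟩)⟩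
  -- Hausdorff distance ≤ r to A
  have hclosle : ∀ (s : Set X) (ρ : ℝ), (∀ z ∈ s, infDist z A ≤ ρ) →
      ∀ z ∈ closure s, infDist z A ≤ ρ := by
    intro s ρ h z hz
    exact closure_minimal h (isClosed_le (continuous_infDist_pt A) continuous_const) hz
  have hgen₁A : ∀ z ∈ Pm '' A, infDist z A ≤ r := by
    rintro z ⟨a, ha, rfl⟩
    have := infDist_le_dist_of_mem (x := Pm a) ha
    rw [dist_comm] at this
    rw [haPm a ha] at this
    exact this
  have hgen₂A : ∀ z ∈ Pp '' A ∪ {xh}, infDist z A ≤ r := by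
    rintro z (⟨a, ha, rfl⟩ | hz)
    · have := infDist_le_dist_of_mem (x := Pp a) ha
      rw [dist_comm, hPp1 a] at this
      exact this
    · rw [Set.mem_singleton_iff] at hz
      subst hz
      have := infDist_le_dist_of_mem (x := xh) hx
      rw [dxhx] at this
      exact this
  have hgen₄A : ∀ z ∈ Pm '' S₁ ∪ Pp '' S₂, infDist z A ≤ r := by
    rintro z (⟨a, ha, rfl⟩ | ⟨a, ha, rfl⟩)
    · exact hgen₁A _ ⟨a, ha.1, rfl⟩
    · have := infDist_le_dist_of_mem (x := Pp a) ha.1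
      rw [dist_comm, hPp1 a] at this
      exact this
  have hAB₁ : hausdorffDist A B₁ ≤ r := by
    apply hausdorffDist_le_of_infDist hr0.le
    · intro a ha
      have h1 := infDist_le_dist_of_mem (x := a) (subset_closure (s := Pm '' A) ⟨a, ha, rfl⟩)
      rw [haPm a ha] at h1
      exact h1
    · exact hclosle _ r hgen₁A
  have hAB₂ : hausdorffDist A B₂ ≤ r := by
    apply hausdorffDist_le_of_infDist hr0.le
    · intro a ha
      have h1 := infDist_le_dist_of_mem (x := a)
        (subset_closure (s := Pp '' A ∪ {xh}) (Set.mem_union_left _ ⟨a, ha, rfl⟩))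
      rw [hPp1 a] at h1
      exact h1
    · exact hclosle _ r hgen₂A
  have hAB₃ : hausdorffDist A B₃ ≤ r := by
    apply hausdorffDist_le_of_infDist hr0.le
    · intro a ha
      have h1 := infDist_le_infDist_of_subset (Set.subset_union_left (t := B₂)) hnB₁ (x := a)
      have h2 := infDist_le_dist_of_mem (x := a) (subset_closure (s := Pm '' A) ⟨a, ha, rfl⟩)
      rw [haPm a ha] at h2
      exact le_trans h1 h2
    · rintro z (hz | hz)
      · exact hclosle _ r hgen₁A z hz
      · exact hclosle _ r hgen₂A z hz
  have hAB₄ : hausdorffDist A B₄ ≤ r := by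
    apply hausdorffDist_le_of_infDist hr0.le
    · intro a ha
      by_cases hcase : 3 * r ≤ dist yh a
      · have h1 := infDist_le_dist_of_mem (x := a)
          (subset_closure (s := Pm '' S₁ ∪ Pp '' S₂) (Set.mem_union_left _ ⟨a, ⟨ha, hcase⟩, rfl⟩))
        rw [haPm a ha] at h1
        exact h1
      · have hmem : a ∈ S₂ := by
          refine ⟨ha, ?_⟩
          have h1 := dist_triangle yh a xh
          rw [dist_comm a xh] at h1
          rw [dyhxh] at h1
          push_neg at hcase
          linarith
        have h1 := infDist_le_dist_of_mem (x := a)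
          (subset_closure (s := Pm '' S₁ ∪ Pp '' S₂) (Set.mem_union_right _ ⟨a, hmem, rfl⟩))
        rw [hPp1 a] at h1
        exact h1
    · exact hclosle _ r hgen₄A
  -- lower bounds for the pair distances
  have lxhPm : ∀ a ∈ A, 2 * r ≤ dist xh (Pm a) := by
    intro a ha
    have h1 := dist_triangle yh (Pm a) xh
    rw [dyhxh, hyhPm a ha] at h1
    rw [dist_comm]
    linarith [hyha_ub a ha]
  have lxhB₁ : 2 * r ≤ infDist xh B₁ := by
    rw [hB₁def, infDist_closure]
    refine le_infDist_of_forall ⟨Pm y, ⟨y, hy, rfl⟩⟩ ?_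
    rintro w ⟨a, ha, rfl⟩
    exact lxhPm a ha
  have lyhB₂ : 2 * r ≤ infDist yh B₂ := by
    rw [hB₂def, infDist_closure]
    refine le_infDist_of_forall ⟨xh, Set.mem_union_right _ rfl⟩ ?_
    rintro w (⟨a, ha, rfl⟩ | hw)
    · rw [hPp2 a]
      linarith [hyha_lb a ha]
    · rw [Set.mem_singleton_iff] at hw
      subst hw
      rw [dyhxh]
      linarith
  have lyhB₄ : 2 * r ≤ infDist yh B₄ := by
    rw [hB₄def, infDist_closure]
    refine le_infDist_of_forall ⟨Pm x, Set.mem_union_left _ ⟨x, hxS₁, rfl⟩⟩ ?_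
    rintro w (⟨a, ha, rfl⟩ | ⟨a, ha, rfl⟩)
    · rw [hyhPm a ha.1]
      linarith [ha.2]
    · rw [hPp2 a]
      linarith [hyha_lb a ha.1]
  have lxhB₄ : 2 * r ≤ infDist xh B₄ := by
    rw [hB₄def, infDist_closure]
    refine le_infDist_of_forall ⟨Pm x, Set.mem_union_left _ ⟨x, hxS₁, rfl⟩⟩ ?_
    rintro w (⟨a, ha, rfl⟩ | ⟨a, ha, rfl⟩)
    · exact lxhPm a ha.1
    · have h1 := dist_triangle xh (Pp a) a
      rw [dist_comm (Pp a) a, hPp1 a] at h1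
      linarith [ha.2]
  -- finiteness of Hausdorff edistances
  have bddA : Bornology.IsBounded A := hA.isBounded
  have bddB₁ : Bornology.IsBounded B₁ := hcB₁.isBounded
  have bddB₂ : Bornology.IsBounded B₂ := hcB₂.isBounded
  have bddB₃ : Bornology.IsBounded B₃ := hcB₃.isBounded
  have bddB₄ : Bornology.IsBounded B₄ := hcB₄.isBounded
  -- pair distances
  have pair_eq : ∀ s t : Set X, s.Nonempty → t.Nonempty → Bornology.IsBounded s →
      Bornology.IsBounded t → hausdorffDist A s ≤ r → hausdorffDist A t ≤ r →
      (∃ z ∈ t, 2 * r ≤ infDist z s) → hausdorffDist s t = 2 * r := by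
    intro s t hsn htn hsb htb hs ht ⟨z, hzt, hz⟩
    apply le_antisymm
    · have fin1 : EMetric.hausdorffEdist s A ≠ ⊤ :=
        hausdorffEdist_ne_top_of_nonempty_of_bounded hsn hAne hsb bddA
      calc hausdorffDist s t ≤ hausdorffDist s A + hausdorffDist A t :=
            hausdorffDist_triangle fin1
        _ ≤ r + r := add_le_add (by rw [hausdorffDist_comm]; exact hs) ht
        _ = 2 * r := by ring
    · have fin2 : EMetric.hausdorffEdist t s ≠ ⊤ :=
        hausdorffEdist_ne_top_of_nonempty_of_bounded htn hsn htb hsb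
      have h1 := infDist_le_hausdorffDist_of_mem hzt fin2
      rw [hausdorffDist_comm] at h1
      linarith
  have e12 : hausdorffDist B₁ B₂ = 2 * r :=
    pair_eq B₁ B₂ hnB₁ hnB₂ bddB₁ bddB₂ hAB₁ hAB₂ ⟨xh, hxhB₂, lxhB₁⟩
  have e13 : hausdorffDist B₁ B₃ = 2 * r :=
    pair_eq B₁ B₃ hnB₁ hnB₃ bddB₁ bddB₃ hAB₁ hAB₃ ⟨xh, Set.mem_union_right _ hxhB₂, lxhB₁⟩
  have e14 : hausdorffDist B₁ B₄ = 2 * r := by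
    rw [hausdorffDist_comm]
    exact pair_eq B₄ B₁ hnB₄ hnB₁ bddB₄ bddB₁ hAB₄ hAB₁ ⟨yh, hyhB₁, lyhB₄⟩
  have e23 : hausdorffDist B₂ B₃ = 2 * r :=
    pair_eq B₂ B₃ hnB₂ hnB₃ bddB₂ bddB₃ hAB₂ hAB₃ ⟨yh, Set.mem_union_left _ hyhB₁, lyhB₂⟩
  have e24 : hausdorffDist B₂ B₄ = 2 * r := by
    rw [hausdorffDist_comm]
    exact pair_eq B₄ B₂ hnB₄ hnB₂ bddB₄ bddB₂ hAB₄ hAB₂ ⟨xh, hxhB₂, lxhB₄⟩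
  have e34 : hausdorffDist B₃ B₄ = 2 * r := by
    rw [hausdorffDist_comm]
    exact pair_eq B₄ B₃ hnB₄ hnB₃ bddB₄ bddB₃ hAB₄ hAB₃
      ⟨yh, Set.mem_union_left _ hyhB₁, lyhB₄⟩
  exact ⟨B₁, B₂, B₃, B₄, ⟨hcB₁, hcB₂, hcB₃, hcB₄⟩, ⟨hnB₁, hnB₂, hnB₃, hnB₄⟩,
    ⟨hAB₁, hAB₂, hAB₃, hAB₄⟩, ⟨e12, e13, e14, e23, e24, e34⟩⟩

end AuxProof

/-- **Lemma 5.2.** Every surjective isometry of `𝔉(X,d)` over a proper, uniquely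
geodesic, geodesically complete space in which geodesics do not split maps singletons
to singletons. -/
theorem image_of_points_are_points_compacts [MetricSpace X] [ProperSpace X]
    (hug : IsUniquelyGeodesic X) (hgc : IsGeodesicallyComplete X)
    (hns : GeodesicsDoNotSplit X)
    (I : NonemptyCompacts X ≃ᵢ NonemptyCompacts X) :
    ∀ p : X, ∃ x : X, ((I (singletonNC p)) : Set X) = {x} := by
  classical
  intro p
  by_contra hcon
  push_neg at hcon
  set A : NonemptyCompacts X := I (singletonNC p) with hAdef
  have hAc : IsCompact (A : Set X) := A.isCompact
  obtain ⟨a0, ha0⟩ := A.nonempty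
  have hex : ∃ b ∈ (A : Set X), b ≠ a0 := by
    by_contra h
    push_neg at h
    exact hcon a0 (Set.eq_singleton_iff_unique_mem.2 ⟨ha0, h⟩)
  obtain ⟨b0, hb0, hb0ne⟩ := hex
  obtain ⟨q, hq_mem, hqmax⟩ := (hAc.prod hAc).exists_isMaxOn
    ⟨(a0, b0), Set.mk_mem_prod ha0 hb0⟩ continuous_dist.continuousOn
  have hxA : q.1 ∈ (A : Set X) := hq_mem.1
  have hyA : q.2 ∈ (A : Set X) := hq_mem.2
  have hdiam : ∀ c ∈ (A : Set X), ∀ d ∈ (A : Set X), dist c d ≤ dist q.1 q.2 :=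
    fun c hc d hd => isMaxOn_iff.1 hqmax (c, d) (Set.mk_mem_prod hc hd)
  have hdpos : 0 < dist q.1 q.2 :=
    lt_of_lt_of_le (dist_pos.2 (Ne.symm hb0ne)) (hdiam a0 ha0 b0 hb0)
  have hne : q.2 ≠ q.1 := by
    intro h
    rw [h, dist_self] at hdpos
    exact lt_irrefl _ hdpos
  have hdiam' : ∀ c ∈ (A : Set X), ∀ d ∈ (A : Set X), dist c d ≤ dist q.2 q.1 := by
    intro c hc d hd
    rw [dist_comm q.2 q.1]
    exact hdiam c hc d hd
  obtain ⟨B₁, B₂, B₃, B₄, ⟨hc1, hc2, hc3, hc4⟩, ⟨hn1, hn2, hn3, hn4⟩,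
    ⟨g1, g2, g3, g4⟩, ⟨p12, p13, p14, p23, p24, p34⟩⟩ :=
    four_around hug hgc hAc hxA hyA hne hdiam'
  set r := dist q.2 q.1 / 5 with hrdef
  have hr0 : 0 < r := by
    rw [hrdef, dist_comm]
    linarith
  set N₁ : NonemptyCompacts X := ⟨⟨B₁, hc1⟩, hn1⟩ with hN₁
  set N₂ : NonemptyCompacts X := ⟨⟨B₂, hc2⟩, hn2⟩ with hN₂
  set N₃ : NonemptyCompacts X := ⟨⟨B₃, hc3⟩, hn3⟩ with hN₃
  set N₄ : NonemptyCompacts X := ⟨⟨B₄, hc4⟩, hn4⟩ with hN₄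
  have hAI : I.symm A = singletonNC p := by
    rw [hAdef]
    exact I.symm_apply_apply _
  have hball : ∀ N : NonemptyCompacts X,
      Metric.hausdorffDist (A : Set X) (N : Set X) ≤ r →
      ∀ z ∈ ((I.symm N : NonemptyCompacts X) : Set X), dist p z ≤ r := by
    intro N hN z hz
    have h1 : dist (I.symm N) (singletonNC p) ≤ r := by
      rw [← hAI, IsometryEquiv.dist_eq]
      rw [NonemptyCompacts.dist_eq, Metric.hausdorffDist_comm]
      exact hN
    have h2 : Metric.hausdorffDist ((I.symm N : NonemptyCompacts X) : Set X)
        ((singletonNC p : NonemptyCompacts X) : Set X) ≤ r := by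
      rw [← NonemptyCompacts.dist_eq]
      exact h1
    have hfin : EMetric.hausdorffEdist ((I.symm N : NonemptyCompacts X) : Set X)
        ((singletonNC p : NonemptyCompacts X) : Set X) ≠ ⊤ :=
      Metric.hausdorffEdist_ne_top_of_nonempty_of_bounded (I.symm N).nonempty
        (singletonNC p).nonempty (I.symm N).isCompact.isBounded
        (singletonNC p).isCompact.isBounded
    have h3 := Metric.infDist_le_hausdorffDist_of_mem hz hfin
    have h4 : Metric.infDist z ((singletonNC p : NonemptyCompacts X) : Set X) = dist z p := by
      have : ((singletonNC p : NonemptyCompacts X) : Set X) = {p} := rfl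
      rw [this, Metric.infDist_singleton]
    rw [h4] at h3
    rw [dist_comm]
    linarith
  have hpair : ∀ N M : NonemptyCompacts X,
      Metric.hausdorffDist (N : Set X) (M : Set X) = 2 * r →
      Metric.hausdorffDist ((I.symm N : NonemptyCompacts X) : Set X)
        ((I.symm M : NonemptyCompacts X) : Set X) = 2 * r := by
    intro N M h
    rw [← NonemptyCompacts.dist_eq, IsometryEquiv.dist_eq, NonemptyCompacts.dist_eq]
    exact h
  exact no_four hug hgc hns hr0
    (I.symm N₁).isCompact (I.symm N₁).nonempty (hball N₁ g1)
    (I.symm N₂).isCompact (I.symm N₂).nonempty (hball N₂ g2)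
    (I.symm N₃).isCompact (I.symm N₃).nonempty (hball N₃ g3)
    (I.symm N₄).isCompact (I.symm N₄).nonempty (hball N₄ g4)
    (hpair N₁ N₂ p12) (hpair N₁ N₃ p13) (hpair N₁ N₄ p14)
    (hpair N₂ N₃ p23) (hpair N₂ N₄ p24) (hpair N₃ N₄ p34)
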